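/- Let G be a graph, (V_0, V_1, ...) a layering of G, and I ⊆ ℕ a finite nonempty set of indices. For j ≥ 0 let d_j := min_{i∈I} |j − i|, and for i ≥ 0 let W_i := ∪{V_j : d_j = i}. Then (W_0, W_1, ...) is a layering of G, each W_i is a union of at most 2|I| of the original layers, and every vertex lying in a layer V_j with j ∈ I belongs to W_0. -/

import Mathlib

open SimpleGraph Set

/-- A layering of a graph: an ordered partition `(L 0, L 1, …)` of the vertex set
such that every edge joins vertices in the same or consecutive layers. -/
def IsLayering {α : Type} (G : SimpleGraph α) (L : ℕ → Set α) : Prop :=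
  (∀ v, ∃! i, v ∈ L i) ∧
  ∀ ⦃v w : α⦄, G.Adj v w → ∀ ⦃i j : ℕ⦄, v ∈ L i → w ∈ L j → i ≤ j + 1 ∧ j ≤ i + 1

/-- A tree-decomposition of `G` with tree `tG` and bags `B`. -/
def IsTreeDecomp {α T : Type} (G : SimpleGraph α) (tG : SimpleGraph T) (B : T → Set α) : Prop :=
  tG.IsTree ∧
  (∀ v : α, (tG.induce {x | v ∈ B x}).Connected) ∧
  (∀ ⦃v w : α⦄, G.Adj v w → ∃ x, v ∈ B x ∧ w ∈ B x)

/-- `G` has treewidth (strictly) less than `k`: a tree-decomposition with bags of size at most `k`. -/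
def TreewidthLT {α : Type} (G : SimpleGraph α) (k : ℕ) : Prop :=
  ∃ (T : Type) (tG : SimpleGraph T) (B : T → Set α),
    IsTreeDecomp G tG B ∧ ∀ x, (B x).encard ≤ k

/-- `G` has treewidth at most `t`. -/
def TreewidthAtMost {α : Type} (G : SimpleGraph α) (t : ℕ) : Prop :=
  TreewidthLT G (t + 1)

/-- Maximum degree at most `Δ`. -/
def MaxDegreeLE {α : Type} (G : SimpleGraph α) (Δ : ℕ) : Prop :=
  ∀ v, (G.neighborSet v).encard ≤ Δ

/-- A colouring `f` has clustering at most `s`: every monochromatic component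
(the set of vertices joined to `v` by a monochromatic walk) has at most `s` vertices. -/
def HasClustering {α β : Type} (G : SimpleGraph α) (f : α → β) (s : ℕ) : Prop :=
  ∀ v : α, {w | ∃ p : G.Walk v w, ∀ u ∈ p.support, f u = f v}.encard ≤ s

/-- Quotient graph of a graph by an indexed partition. -/
def QuotGraph {α ι : Type} (G : SimpleGraph α) (P : ι → Set α) : SimpleGraph ι where
  Adj x y := x ≠ y ∧ ∃ v w, v ∈ P x ∧ w ∈ P y ∧ G.Adj v w
  symm := by constructor; rintro x y ⟨h, v, w, hv, hw, hvw⟩; exact ⟨h.symm, w, v, hw, hv, hvw.symm⟩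
  loopless := by constructor; rintro x ⟨h, _⟩; exact h rfl

/-- The strong product of two graphs. -/
def StrongProd {α β : Type} (A : SimpleGraph α) (B : SimpleGraph β) : SimpleGraph (α × β) where
  Adj x y := x ≠ y ∧ (x.1 = y.1 ∨ A.Adj x.1 y.1) ∧ (x.2 = y.2 ∨ B.Adj x.2 y.2)
  symm := by
    constructor; rintro x y ⟨h, h1, h2⟩
    exact ⟨h.symm, h1.imp Eq.symm Adj.symm, h2.imp Eq.symm Adj.symm⟩
  loopless := by constructor; rintro x ⟨h, _⟩; exact h rfl

/-- The one-way infinite path on `ℕ`. -/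
def NatPath : SimpleGraph ℕ where
  Adj i j := j = i + 1 ∨ i = j + 1
  symm := by constructor; rintro i j (h | h); exacts [Or.inr h, Or.inl h]
  loopless := by constructor; rintro i (h | h) <;> omega

/-- The `p`-th power of a graph: join vertices at distance between 1 and `p`. -/
def PowerGraph {α : Type} (G : SimpleGraph α) (p : ℕ) : SimpleGraph α where
  Adj v w := v ≠ w ∧ ∃ q : G.Walk v w, q.length ≤ p
  symm := by constructor; rintro v w ⟨h, q, hq⟩; exact ⟨h.symm, q.reverse, by simpa using hq⟩
  loopless := by constructor; rintro v ⟨h, _⟩; exact h rfl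

/-- `G` has layered treewidth at most `k`. -/
def LayeredTreewidthLE {α : Type} (G : SimpleGraph α) (k : ℕ) : Prop :=
  ∃ (T : Type) (tG : SimpleGraph T) (B : T → Set α) (L : ℕ → Set α),
    IsTreeDecomp G tG B ∧ IsLayering G L ∧ ∀ x i, (B x ∩ L i).encard ≤ k

/-- An `H`-partition of `G`: parts indexed by vertices of `H` such that every edge of `G`
lies within a part or between parts adjacent in `H`. -/
def IsGraphPartition {α ι : Type} (G : SimpleGraph α) (H : SimpleGraph ι) (A : ι → Set α) : Prop :=
  (∀ v, ∃! x, v ∈ A x) ∧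
  ∀ ⦃v w : α⦄, G.Adj v w → ∀ ⦃x y : ι⦄, v ∈ A x → w ∈ A y → x = y ∨ H.Adj x y

/-- A `(k,ℓ)`-partition: a partition into nonempty parts whose quotient has treewidth at
most `k`, having layered width at most `ℓ` with respect to some layering. -/
def HasKLPartition {α : Type} (G : SimpleGraph α) (k ℓ : ℕ) : Prop :=
  ∃ (ι : Type) (P : ι → Set α),
    (∀ v, ∃! x, v ∈ P x) ∧ (∀ x, (P x).Nonempty) ∧
    TreewidthAtMost (QuotGraph G P) k ∧
    ∃ L, IsLayering G L ∧ ∀ x i, (P x ∩ L i).encard ≤ ℓ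

/-- Re-layering towards a finite set `I` of indices. With `d j` the distance
from `j` to `I` and `W i` the union of the layers `V j` with `d j = i`: `(W 0, W 1, …)` is a
layering of `G`, each `W i` is the union of at most `2|I|` original layers, and every layer
`V j` with `j ∈ I` is contained in `W 0`. -/
theorem stmt19 {α : Type} (G : SimpleGraph α) (V : ℕ → Set α) (hV : IsLayering G V)
    (I : Finset ℕ) (hI : I.Nonempty)
    (d : ℕ → ℕ) (hd : ∀ j, d j = I.inf' hI fun i => max j i - min j i)
    (W : ℕ → Set α) (hW : ∀ i, W i = {v | ∃ j, d j = i ∧ v ∈ V j}) :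
    IsLayering G W ∧ (∀ i, {j | d j = i}.encard ≤ ((2 * I.card : ℕ) : ℕ∞)) ∧
      ∀ j ∈ I, V j ⊆ W 0 := by
  have hd' : ∀ j, ∃ k ∈ I, d j = max j k - min j k ∧ ∀ m ∈ I, d j ≤ max j m - min j m := by
    intro j
    obtain ⟨k, hk, hdk⟩ := I.exists_mem_eq_inf' hI (fun i => max j i - min j i)
    exact ⟨k, hk, by rw [hd]; exact hdk, fun m hm => by rw [hd]; exact Finset.inf'_le _ hm⟩
  have hlip : ∀ a b : ℕ, a ≤ b + 1 → b ≤ a + 1 → d a ≤ d b + 1 := by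
    intro a b h1 h2
    obtain ⟨k, hk, hdk, -⟩ := hd' b
    obtain ⟨-, -, -, hle⟩ := hd' a
    have := hle k hk
    omega
  refine ⟨⟨?_, ?_⟩, ?_, ?_⟩
  · intro v
    obtain ⟨j, hj, hju⟩ := hV.1 v
    refine ⟨d j, by show v ∈ W (d j); rw [hW]; exact ⟨j, rfl, hj⟩, ?_⟩
    intro i hi
    simp only [hW, Set.mem_setOf_eq] at hi
    obtain ⟨j', hj', hvj'⟩ := hi
    rw [← hj', hju j' hvj']
  · intro v w hvw i j hv hw
    rw [hW] at hv hw
    obtain ⟨a, ha, hva⟩ := hv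
    obtain ⟨b, hb, hwb⟩ := hw
    obtain ⟨h1, h2⟩ := hV.2 hvw hva hwb
    subst ha hb
    exact ⟨hlip a b h1 h2, hlip b a h2 h1⟩
  · intro i
    have hsub : {j | d j = i} ⊆ ↑(I.biUnion fun k => {k + i, k - i}) := by
      intro j hj
      obtain ⟨k, hk, hdk, -⟩ := hd' j
      simp only [Set.mem_setOf_eq] at hj
      simp only [Finset.coe_biUnion, Finset.mem_coe, Set.mem_iUnion, Finset.mem_insert,
        Finset.mem_singleton]
      exact ⟨k, hk, by omega⟩
    calc {j | d j = i}.encard ≤ (↑(I.biUnion fun k => {k + i, k - i}) : Set ℕ).encard :=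
          Set.encard_mono hsub
      _ = ((I.biUnion fun k => ({k + i, k - i} : Finset ℕ)).card : ℕ∞) :=
          Set.encard_coe_eq_coe_finsetCard _
      _ ≤ ((2 * I.card : ℕ) : ℕ∞) := by
          norm_cast
          calc (I.biUnion fun k => ({k + i, k - i} : Finset ℕ)).card
              ≤ ∑ k ∈ I, ({k + i, k - i} : Finset ℕ).card := Finset.card_biUnion_le
            _ ≤ ∑ _k ∈ I, 2 := Finset.sum_le_sum fun k _ => Finset.card_insert_le _ _
            _ = 2 * I.card := by rw [Finset.sum_const]; ring
  · intro j hj v hv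
    have hd0 : d j = 0 := by
      obtain ⟨-, -, -, hle⟩ := hd' j
      have := hle j hj
      omega
    rw [hW]
    exact ⟨j, hd0, hv⟩
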